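/- Let (a_n) be a sequence of reals such that for every n there exists k > n with Σ_{m=n+1}^{k} |a_m| ≥ 2. Then there exists a permutation σ of ℕ such that the series Σ_n a_{σ(n)} diverges. -/

import Mathlib

open Finset

namespace DivPermAux
noncomputable section

variable (a : ℕ → ℝ) (k : ℕ → ℕ)

/-- Block endpoints. -/
def NN : ℕ → ℕ
  | 0 => 0
  | i + 1 => k (NN i)

lemma NN_mono (hk : ∀ n, n < k n) : StrictMono (NN k) :=
  strictMono_nat_of_lt_succ fun i => hk (NN k i)

lemma le_NN (hk : ∀ n, n < k n) (i : ℕ) : i ≤ NN k i := by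
  induction i with
  | zero => simp [NN]
  | succ i ih => exact Nat.succ_le_of_lt (lt_of_le_of_lt ih (hk (NN k i)))

/-- The i-th block of indices. -/
def blk (i : ℕ) : Finset ℕ := Finset.Ioc (NN k i) (NN k (i + 1))

def posF (i : ℕ) : Finset ℕ := (blk k i).filter (fun m => 0 ≤ a m)
def negF (i : ℕ) : Finset ℕ := (blk k i).filter (fun m => ¬ 0 ≤ a m)

/-- Enumeration of the block: positive-term indices first. -/
def LL (i : ℕ) : List ℕ := (posF a k i).sort (· ≤ ·) ++ (negF a k i).sort (· ≤ ·)

lemma mem_LL {m i : ℕ} : m ∈ LL a k i ↔ m ∈ blk k i := by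
  simp only [LL, List.mem_append, Finset.mem_sort, posF, negF, Finset.mem_filter]
  tauto

lemma nodup_LL (i : ℕ) : (LL a k i).Nodup := by
  refine List.Nodup.append (Finset.sort_nodup _ _) (Finset.sort_nodup _ _) ?_
  intro x hx hx'
  rw [Finset.mem_sort] at hx hx'
  simp only [posF, negF, Finset.mem_filter] at hx hx'
  exact hx'.2 hx.2

lemma length_LL (i : ℕ) : (LL a k i).length = (blk k i).card := by
  simp only [LL, List.length_append, Finset.length_sort]
  exact Finset.card_filter_add_card_filter_not _

lemma exists_idx (hk : ∀ n, n < k n) (m : ℕ) : ∃ i, m ≤ NN k (i + 1) :=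
  ⟨m, le_trans (le_NN k hk m) (le_of_lt (hk _))⟩

/-- The index of the block containing `m` (for `m ≥ 1`). -/
def idx (hk : ∀ n, n < k n) (m : ℕ) : ℕ := Nat.find (exists_idx k hk m)

lemma idx_mem (hk : ∀ n, n < k n) {m : ℕ} (hm : 1 ≤ m) : m ∈ blk k (idx k hk m) := by
  have h2 : m ≤ NN k (idx k hk m + 1) := Nat.find_spec (exists_idx k hk m)
  rw [blk, Finset.mem_Ioc]
  refine ⟨?_, h2⟩
  rcases Nat.eq_zero_or_pos (idx k hk m) with h0 | h0
  · rw [h0]; simp [NN]; omega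
  · have hlt : idx k hk m - 1 < idx k hk m := by omega
    have hmin : ¬ m ≤ NN k (idx k hk m - 1 + 1) := Nat.find_min (exists_idx k hk m) hlt
    have he1 : idx k hk m - 1 + 1 = idx k hk m := by omega
    rw [he1] at hmin
    omega

lemma idx_eq (hk : ∀ n, n < k n) {m i : ℕ} (hm : m ∈ blk k i) : idx k hk m = i := by
  rw [blk, Finset.mem_Ioc] at hm
  refine le_antisymm (Nat.find_le hm.2) ?_
  by_contra hlt
  push_neg at hlt
  have h2 : m ≤ NN k (idx k hk m + 1) := Nat.find_spec (exists_idx k hk m)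
  have : NN k (idx k hk m + 1) ≤ NN k i := (NN_mono k hk).monotone (by omega)
  omega

/-- The permutation, as a function. -/
def g (hk : ∀ n, n < k n) (m : ℕ) : ℕ :=
  if m = 0 then 0 else (LL a k (idx k hk m)).getD (m - NN k (idx k hk m) - 1) 0

lemma g_zero (hk : ∀ n, n < k n) : g a k hk 0 = 0 := rfl

lemma blk_card (i : ℕ) : (blk k i).card = NN k (i + 1) - NN k i := by
  simp [blk]

lemma g_eq (hk : ∀ n, n < k n) {m i : ℕ} (hm : m ∈ blk k i) :
    g a k hk m = (LL a k i).getD (m - NN k i - 1) 0 ∧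
      m - NN k i - 1 < (LL a k i).length := by
  have hm' := hm
  rw [blk, Finset.mem_Ioc] at hm'
  have h1 : 1 ≤ m := by omega
  have hidx := idx_eq k hk hm
  constructor
  · simp only [g]
    rw [if_neg (by omega), hidx]
  · rw [length_LL, blk_card]; omega

lemma g_mem (hk : ∀ n, n < k n) {m i : ℕ} (hm : m ∈ blk k i) : g a k hk m ∈ blk k i := by
  obtain ⟨he, hl⟩ := g_eq a k hk hm
  rw [← mem_LL a k, he, List.getD_eq_getElem _ _ hl]
  exact List.getElem_mem hl

lemma blk_disj (hk : ∀ n, n < k n) {i j : ℕ} (hij : i ≠ j) {m : ℕ} (h1 : m ∈ blk k i) (h2 : m ∈ blk k j) :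
    False := by
  rw [blk, Finset.mem_Ioc] at h1 h2
  rcases Nat.lt_or_ge i j with h | h
  · have : NN k (i + 1) ≤ NN k j := (NN_mono k hk).monotone h
    omega
  · have : NN k (j + 1) ≤ NN k i := (NN_mono k hk).monotone (by omega)
    omega

lemma g_pos (hk : ∀ n, n < k n) {m : ℕ} (hm : 1 ≤ m) : 1 ≤ g a k hk m := by
  have := g_mem a k hk (idx_mem k hk hm)
  rw [blk, Finset.mem_Ioc] at this
  omega

lemma g_bij (hk : ∀ n, n < k n) : Function.Bijective (g a k hk) := by
  constructor
  · intro m1 m2 he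
    rcases Nat.eq_zero_or_pos m1 with h1 | h1
    · rcases Nat.eq_zero_or_pos m2 with h2 | h2
      · omega
      · have hg2 := g_pos a k hk h2
        rw [h1, g_zero a k hk] at he
        omega
    · rcases Nat.eq_zero_or_pos m2 with h2 | h2
      · have hg1 := g_pos a k hk h1
        rw [h2, g_zero a k hk] at he
        omega
      · have hb1 := idx_mem k hk h1
        have hb2 := idx_mem k hk h2
        have hg1 := g_mem a k hk hb1
        have hg2 := g_mem a k hk hb2
        have hii : idx k hk m1 = idx k hk m2 := by
          by_contra hne
          exact blk_disj k hk hne (he ▸ hg1) hg2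
        set i := idx k hk m1 with hi
        rw [hii] at hb1 hg1
        obtain ⟨he1, hl1⟩ := g_eq a k hk hb1
        obtain ⟨he2, hl2⟩ := g_eq a k hk hb2
        rw [he1, he2, List.getD_eq_getElem _ _ hl1, List.getD_eq_getElem _ _ hl2] at he
        have := (List.Nodup.getElem_inj_iff (nodup_LL a k _)).mp he
        rw [blk, Finset.mem_Ioc] at hb1 hb2
        omega
  · intro v
    rcases Nat.eq_zero_or_pos v with h0 | h0
    · exact ⟨0, by rw [g_zero, h0]⟩
    · have hb : v ∈ blk k (idx k hk v) := idx_mem k hk h0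
      set i := idx k hk v with hi
      have hvL : v ∈ LL a k i := (mem_LL a k).mpr hb
      obtain ⟨t, ht⟩ := List.get_of_mem hvL
      refine ⟨NN k i + 1 + t.1, ?_⟩
      have htl : (t : ℕ) < (LL a k i).length := t.2
      have hmem : NN k i + 1 + t.1 ∈ blk k i := by
        rw [blk, Finset.mem_Ioc]
        have := length_LL a k i
        rw [blk_card] at this
        have hN := NN_mono k hk (Nat.lt_succ_self i)
        omega
      obtain ⟨he, _⟩ := g_eq a k hk hmem
      rw [he]
      have : NN k i + 1 + t.1 - NN k i - 1 = t.1 := by omega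
      rw [this, List.getD_eq_getElem _ _ htl]
      rw [← ht]; rfl

lemma sort_map_sum (s : Finset ℕ) :
    (((s.sort (· ≤ ·)).map a).sum) = ∑ m ∈ s, a m := by
  rw [← Finset.sum_map_toList]
  exact List.Perm.sum_eq (List.Perm.map a (Finset.sort_perm_toList s _))

/-- partial sums over an initial segment of a block -/
lemma sum_block (hk : ∀ n, n < k n) (i t : ℕ) (ht : t ≤ (LL a k i).length) :
    ∑ j ∈ Finset.range (NN k i + 1 + t), a (g a k hk j) =
      (∑ j ∈ Finset.range (NN k i + 1), a (g a k hk j)) +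
        (((LL a k i).take t).map a).sum := by
  rw [Finset.sum_range_add]
  congr 1
  induction t with
  | zero => simp
  | succ t ih =>
    have htl : t < (LL a k i).length := by omega
    rw [Finset.sum_range_succ, ih (by omega)]
    simp only [List.map_take]
    rw [List.sum_take_succ _ t (by simpa using htl)]
    congr 1
    have hmem : NN k i + 1 + t ∈ blk k i := by
      rw [blk, Finset.mem_Ioc]
      have := length_LL a k i
      rw [blk_card] at this
      have hN := NN_mono k hk (Nat.lt_succ_self i)
      omega
    obtain ⟨he, _⟩ := g_eq a k hk hmem
    rw [he]
    have h1 : NN k i + 1 + t - NN k i - 1 = t := by omega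
    rw [h1, List.getD_eq_getElem _ _ htl]
    simp [List.get_eq_getElem]

end
end DivPermAux

theorem diverging_permutation (a : ℕ → ℝ)
    (h : ∀ n : ℕ, ∃ k, n < k ∧ 2 ≤ ∑ m ∈ Finset.Icc (n + 1) k, |a m|) :
    ∃ σ : Equiv.Perm ℕ,
      ¬ ∃ L : ℝ, Filter.Tendsto (fun m => ∑ n ∈ Finset.range m, a (σ n))
        Filter.atTop (nhds L) := by
  classical
  choose k hk1 hk2 using h
  open DivPermAux in
  refine ⟨Equiv.ofBijective _ (DivPermAux.g_bij a k hk1), ?_⟩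
  rintro ⟨L0, hT⟩
  set S : ℕ → ℝ := fun m => ∑ n ∈ Finset.range m, a (DivPermAux.g a k hk1 n) with hS
  have hT' : Filter.Tendsto S Filter.atTop (nhds L0) := hT
  have hC : CauchySeq S := hT'.cauchySeq
  obtain ⟨N0, hN0⟩ := Metric.cauchySeq_iff'.mp hC (1/2) (by norm_num)
  -- take the block i = N0
  set i := N0 with hi
  set p := DivPermAux.NN k i + 1 with hp
  have hpN : N0 ≤ p := by
    have := DivPermAux.le_NN k hk1 i
    omega
  -- the sums over positive and negative parts
  set sP : ℝ := ∑ m ∈ DivPermAux.posF a k i, a m with hsP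
  set sN : ℝ := ∑ m ∈ DivPermAux.negF a k i, a m with hsN
  have hsPnn : 0 ≤ sP :=
    Finset.sum_nonneg fun m hm => (Finset.mem_filter.mp hm).2
  have hsNnp : sN ≤ 0 :=
    Finset.sum_nonpos fun m hm => le_of_not_ge (Finset.mem_filter.mp hm).2
  have habs : sP - sN = ∑ m ∈ DivPermAux.blk k i, |a m| := by
    rw [← Finset.sum_filter_add_sum_filter_not (DivPermAux.blk k i) (fun m => 0 ≤ a m) (fun m => |a m|)]
    rw [hsP, hsN, DivPermAux.posF, DivPermAux.negF, sub_eq_add_neg, ← Finset.sum_neg_distrib]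
    congr 1
    · exact Finset.sum_congr rfl fun m hm => (abs_of_nonneg (Finset.mem_filter.mp hm).2).symm
    · exact Finset.sum_congr rfl fun m hm =>
        (abs_of_neg (lt_of_not_ge (Finset.mem_filter.mp hm).2)).symm ▸ rfl
  have h2le : (2 : ℝ) ≤ sP - sN := by
    rw [habs, DivPermAux.blk]
    have := hk2 (DivPermAux.NN k i)
    rw [← Finset.Icc_add_one_left_eq_Ioc]
    exact this
  -- partial sums at the special points
  have hPcard : (DivPermAux.posF a k i).card ≤ (DivPermAux.LL a k i).length := by
    simp [DivPermAux.LL]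
  have hq1 : S (p + (DivPermAux.posF a k i).card) = S p + sP := by
    rw [hS]
    simp only []
    rw [hp]
    rw [DivPermAux.sum_block a k hk1 i _ hPcard]
    congr 1
    rw [DivPermAux.LL, List.take_left' (by simp)]
    exact DivPermAux.sort_map_sum a _
  have hq2 : S (p + (DivPermAux.LL a k i).length) = S p + sP + sN := by
    rw [hS]
    simp only []
    rw [hp]
    rw [DivPermAux.sum_block a k hk1 i _ le_rfl]
    rw [List.take_length, DivPermAux.LL, List.map_append, List.sum_append,
      DivPermAux.sort_map_sum a, DivPermAux.sort_map_sum a, add_assoc]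
  -- Cauchy contradiction
  have key : ∀ m1 m2, N0 ≤ m1 → N0 ≤ m2 → |S m1 - S m2| < 1 := by
    intro m1 m2 h1 h2
    have d1 := hN0 m1 h1
    have d2 := hN0 m2 h2
    rw [Real.dist_eq] at d1 d2
    calc |S m1 - S m2| ≤ |S m1 - S N0| + |S N0 - S m2| := abs_sub_le _ _ _
    _ < 1/2 + 1/2 := by rw [abs_sub_comm (S N0)]; exact add_lt_add d1 d2
    _ = 1 := by norm_num
  rcases le_or_gt 1 sP with hc | hc
  · have := key (p + (DivPermAux.posF a k i).card) p (by omega) hpN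
    rw [hq1] at this
    simp only [add_sub_cancel_left] at this
    rw [abs_of_nonneg hsPnn] at this
    linarith
  · have h1N : 1 ≤ -sN := by linarith
    have := key (p + (DivPermAux.LL a k i).length) (p + (DivPermAux.posF a k i).card) (by omega) (by omega)
    rw [hq1, hq2] at this
    have he : S p + sP + sN - (S p + sP) = sN := by ring
    rw [he] at this
    rw [abs_of_nonpos hsNnp] at this
    linarith
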